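/- (Sufficiency of additivity on orthogonal projectors for convexity) Let L, R : Matrix (Fin d) (Fin d) ℂ → ℝ satisfy 0 ≤ L P ≤ R P ≤ 1 for every projector P, L 0 = R 0 = 0, L 1 = R 1 = 1, L (1 − P) = 1 − R P and R (1 − P) = 1 − L P for every projector P, and suppose that for all projectors P₀, P₁ with P₀ * P₁ = 0 one has L (P₀ + P₁) = L P₀ + L P₁ and R (P₀ + P₁) = R P₀ + R P₁. Then for all projectors P, P' with P * P' = P' * P one has L (P + P' − P * P') + L (P * P') = L P + L P' and R (P + P' − P * P') + R (P * P') = R P + R P'; in particular the convexity condition holds and (L, R) is a QIVPM on ℂ^d. -/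
import Mathlib


open Matrix
open scoped ComplexOrder

/-- A projector on `ℂ^d`: an idempotent, self-adjoint matrix. -/
def IsProjector {d : ℕ} (P : Matrix (Fin d) (Fin d) ℂ) : Prop :=
  P * P = P ∧ Pᴴ = P

/-- A quantum interval-valued probability measure (QIVPM) on `ℂ^d`,
given by the pair of interval-endpoint functions `L ≤ R`. -/
def IsQIVPM {d : ℕ} (L R : Matrix (Fin d) (Fin d) ℂ → ℝ) : Prop :=
  (∀ P, IsProjector P → 0 ≤ L P ∧ L P ≤ R P ∧ R P ≤ 1) ∧
  (L 0 = 0 ∧ R 0 = 0) ∧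
  (L 1 = 1 ∧ R 1 = 1) ∧
  (∀ P, IsProjector P → L (1 - P) = 1 - R P ∧ R (1 - P) = 1 - L P) ∧
  (∀ P₀ P₁, IsProjector P₀ → IsProjector P₁ → P₀ * P₁ = P₁ * P₀ →
    L P₀ + L P₁ ≤ L (P₀ + P₁ - P₀ * P₁) + L (P₀ * P₁) ∧
    R (P₀ + P₁ - P₀ * P₁) + R (P₀ * P₁) ≤ R P₀ + R P₁)

/-- A QIVPM is `δ`-deterministic if every projector's interval lies in `[0,δ]` or `[1-δ,1]`. -/
def IsDeltaDet {d : ℕ} (δ : ℝ) (L R : Matrix (Fin d) (Fin d) ℂ → ℝ) : Prop :=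
  ∀ P, IsProjector P → R P ≤ δ ∨ 1 - δ ≤ L P

/-- A QIVPM is `0`-deterministic if every projector is assigned `[0,0]` or `[1,1]`. -/
def IsZeroDet {d : ℕ} (L R : Matrix (Fin d) (Fin d) ℂ → ℝ) : Prop :=
  ∀ P, IsProjector P → (L P = 0 ∧ R P = 0) ∨ (L P = 1 ∧ R P = 1)

/-- A state (density matrix) on `ℂ^d`. -/
def IsState {d : ℕ} (ρ : Matrix (Fin d) (Fin d) ℂ) : Prop :=
  ρ.PosSemidef ∧ ρ.trace = 1

/-- Sufficiency of additivity on orthogonal projectors for convexity. -/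
theorem additivity_implies_convexity (d : ℕ) (L R : Matrix (Fin d) (Fin d) ℂ → ℝ)
    (h1 : ∀ P, IsProjector P → 0 ≤ L P ∧ L P ≤ R P ∧ R P ≤ 1)
    (h2 : L 0 = 0 ∧ R 0 = 0)
    (h3 : L 1 = 1 ∧ R 1 = 1)
    (h4 : ∀ P, IsProjector P → L (1 - P) = 1 - R P ∧ R (1 - P) = 1 - L P)
    (h5 : ∀ P₀ P₁, IsProjector P₀ → IsProjector P₁ → P₀ * P₁ = 0 →
      L (P₀ + P₁) = L P₀ + L P₁ ∧ R (P₀ + P₁) = R P₀ + R P₁) :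
    (∀ P P', IsProjector P → IsProjector P' → P * P' = P' * P →
      L (P + P' - P * P') + L (P * P') = L P + L P' ∧
      R (P + P' - P * P') + R (P * P') = R P + R P') ∧
    IsQIVPM L R := by
  have key : ∀ P P', IsProjector P → IsProjector P' → P * P' = P' * P →
      L (P + P' - P * P') + L (P * P') = L P + L P' ∧
      R (P + P' - P * P') + R (P * P') = R P + R P' := by
    intro P P' hP hP' hc
    obtain ⟨hP2, hPH⟩ := hP
    obtain ⟨hP'2, hP'H⟩ := hP'
    set Q := P * P' with hQ
    have hQ2 : Q * Q = Q := by
      have e1 : (P * P') * (P * P') = P * (P' * P) * P' := by noncomm_ring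
      rw [hQ, e1, ← hc]
      have e2 : P * (P * P') * P' = (P * P) * (P' * P') := by noncomm_ring
      rw [e2, hP2, hP'2]
    have hQH : Qᴴ = Q := by
      rw [hQ, conjTranspose_mul, hPH, hP'H, ← hc]
    have hQproj : IsProjector Q := ⟨hQ2, hQH⟩
    have hPQ : P * Q = Q := by rw [hQ, ← mul_assoc, hP2]
    have hQP' : Q * P' = Q := by rw [hQ, mul_assoc, hP'2]
    have hQP : Q * P = Q := by
      have e1 : Q * P = P * (P' * P) := by rw [hQ]; noncomm_ring
      rw [e1, ← hc, ← mul_assoc, hP2]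
    have hP'Q : P' * Q = Q := by
      have e1 : P' * Q = (P' * P) * P' := by rw [hQ]; noncomm_ring
      rw [e1, ← hc, mul_assoc, hP'2]
    set A := P - Q with hA
    set B := P' - Q with hB
    have hAproj : IsProjector A := by
      constructor
      · have e : (P - Q) * (P - Q) = P * P - P * Q - Q * P + Q * Q := by noncomm_ring
        rw [hA, e, hP2, hPQ, hQP, hQ2]; abel
      · rw [hA, conjTranspose_sub, hPH, hQH]
    have hBproj : IsProjector B := by
      constructor
      · have e : (P' - Q) * (P' - Q) = P' * P' - P' * Q - Q * P' + Q * Q := by noncomm_ring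
        rw [hB, e, hP'2, hP'Q, hQP', hQ2]; abel
      · rw [hB, conjTranspose_sub, hP'H, hQH]
    have hAB : A * B = 0 := by
      have e : (P - Q) * (P' - Q) = P * P' - P * Q - Q * P' + Q * Q := by noncomm_ring
      rw [hA, hB, e, ← hQ, hPQ, hQP', hQ2]; abel
    have hBA : B * A = 0 := by
      have e : (P' - Q) * (P - Q) = P' * P - P' * Q - Q * P + Q * Q := by noncomm_ring
      rw [hB, hA, e, ← hc, hP'Q, hQP, hQ2]; abel
    have hABproj : IsProjector (A + B) := by
      constructor
      · have e : (A + B) * (A + B) = A * A + A * B + (B * A + B * B) := by noncomm_ring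
        rw [e, hAproj.1, hBproj.1, hAB, hBA]; abel
      · rw [conjTranspose_add, hAproj.2, hBproj.2]
    have hAQ : A * Q = 0 := by rw [hA, sub_mul, hPQ, hQ2, sub_self]
    have hBQ : B * Q = 0 := by rw [hB, sub_mul, hP'Q, hQ2, sub_self]
    have hABQ : (A + B) * Q = 0 := by rw [add_mul, hAQ, hBQ, add_zero]
    have hPsplit : A + Q = P := by rw [hA]; abel
    have hP'split : B + Q = P' := by rw [hB]; abel
    have hSsplit : (A + B) + Q = P + P' - Q := by rw [hA, hB]; abel
    have e1 := h5 A Q hAproj hQproj hAQ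
    have e2 := h5 B Q hBproj hQproj hBQ
    have e3 := h5 (A + B) Q hABproj hQproj hABQ
    have e4 := h5 A B hAproj hBproj hAB
    rw [hPsplit] at e1
    rw [hP'split] at e2
    rw [hSsplit] at e3
    constructor <;> [skip; skip] <;>
      linarith [e1.1, e2.1, e3.1, e4.1, e1.2, e2.2, e3.2, e4.2]
  refine ⟨key, h1, h2, h3, h4, ?_⟩
  intro P₀ P₁ hP₀ hP₁ hc
  obtain ⟨hL, hR⟩ := key P₀ P₁ hP₀ hP₁ hc
  constructor <;> linarith
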